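/- The set S = {λ ∈ ℂ : λ e^{λ} = 1} is countably infinite, every element of S is a simple zero of the entire function λ e^{λ} − 1, and S contains exactly one real number (the Omega constant). Moreover, there is a bijective enumeration (λ_k)_{k∈ℤ} of S such that Im λ_k < Im λ_{k+1} for all k, λ₀ is the real element, λ_{−k} is the complex conjugate of λ_k for all k, and there exist constants 0 < c ≤ C and an integer K ≥ 2 such that for all |k| ≥ K: c·ln|k| ≤ −Re λ_k ≤ C·ln|k|, c·|k| ≤ |λ_k| ≤ C·|k|, c ≤ |λ_{k+1} − λ_k| ≤ C, and |conj(λ_k) + λ_{k+1}| ≥ c. -/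

import Mathlib

open Complex Set

noncomputable section

namespace Stmt5Aux

local notation "π" => Real.pi

/-- Auxiliary real function whose zeros give the imaginary parts of the roots. -/
def F (y : ℝ) : ℝ := Real.log y - Real.log (-Real.sin y) - y * Real.cos y / Real.sin y

lemma hasDerivAt_F {y : ℝ} (hy : 0 < y) (hs : Real.sin y ≠ 0) :
    HasDerivAt F (1/y + (y - 2 * Real.cos y * Real.sin y) / Real.sin y ^ 2) y := by
  have h1 : HasDerivAt Real.log y⁻¹ y := Real.hasDerivAt_log hy.ne'
  have h2 : HasDerivAt (fun t => Real.log (-Real.sin t)) ((-Real.cos y) / (-Real.sin y)) y := by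
    have : HasDerivAt (fun t => -Real.sin t) (-Real.cos y) y := (Real.hasDerivAt_sin y).neg
    exact this.log (by simpa using hs)
  have h3 : HasDerivAt (fun t => t * Real.cos t / Real.sin t)
      (((1 * Real.cos y + y * -Real.sin y) * Real.sin y - y * Real.cos y * Real.cos y) /
        Real.sin y ^ 2) y := by
    exact ((hasDerivAt_id y).mul (Real.hasDerivAt_cos y)).div (Real.hasDerivAt_sin y) hs
  have h := (h1.sub h2).sub h3
  refine h.congr_deriv ?_; symm
  field_simp
  linear_combination (-y ^ 2) * Real.sin_sq_add_cos_sq y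

lemma deriv_F_pos {y : ℝ} (hy : 1 < y) (hs : Real.sin y ≠ 0) :
    0 < 1/y + (y - 2 * Real.cos y * Real.sin y) / Real.sin y ^ 2 := by
  have h0 : (0:ℝ) < y := lt_trans one_pos hy
  have hsq : 0 < Real.sin y ^ 2 := by positivity
  have h2 : 2 * Real.cos y * Real.sin y ≤ 1 := by
    nlinarith [Real.sin_sq_add_cos_sq y, sq_nonneg (Real.sin y - Real.cos y)]
  have : 0 < (y - 2 * Real.cos y * Real.sin y) / Real.sin y ^ 2 :=
    div_pos (by linarith) hsq
  positivity

lemma sin_lt_zero_of_mem {k : ℕ} (hk : 1 ≤ k) {y : ℝ}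
    (h : y ∈ Ioo (2*π*k - π) (2*π*k)) : Real.sin y < 0 := by
  have hsin : Real.sin y = Real.sin (y - 2*π*k) := by
    have := Real.sin_add_int_mul_two_pi (y - 2*π*k) (k : ℤ)
    push_cast at this
    rw [← this]; ring_nf
  rw [hsin]
  exact Real.sin_neg_of_neg_of_neg_pi_lt (by have := h.2; linarith) (by have := h.1; linarith)

lemma F_strictMonoOn (k : ℕ) (hk : 1 ≤ k) :
    StrictMonoOn F (Ioo (2*π*k - π) (2*π*k)) := by
  have hpi := Real.pi_gt_three
  have hy1 : ∀ y ∈ Ioo (2*π*k - π) (2*π*k), 1 < y := by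
    intro y hy
    have : (1:ℝ) ≤ k := by exact_mod_cast hk
    nlinarith [hy.1]
  have hD : ∀ y ∈ Ioo (2*π*k - π) (2*π*k),
      HasDerivAt F (1/y + (y - 2 * Real.cos y * Real.sin y) / Real.sin y ^ 2) y := by
    intro y hy
    exact hasDerivAt_F (lt_trans one_pos (hy1 y hy)) (sin_lt_zero_of_mem hk hy).ne
  apply strictMonoOn_of_deriv_pos (convex_Ioo _ _)
  · exact fun y hy => (hD y hy).continuousAt.continuousWithinAt
  · intro y hy
    rw [interior_Ioo] at hy
    rw [(hD y hy).deriv]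
    exact deriv_F_pos (hy1 y hy) (sin_lt_zero_of_mem hk hy).ne


lemma sin_shift (x : ℝ) (k : ℕ) : Real.sin (2*π*k + x) = Real.sin x := by
  have := Real.sin_add_int_mul_two_pi x (k : ℤ)
  push_cast at this
  rw [← this]; ring_nf

lemma cos_shift (x : ℝ) (k : ℕ) : Real.cos (2*π*k + x) = Real.cos x := by
  have := Real.cos_add_int_mul_two_pi x (k : ℤ)
  push_cast at this
  rw [← this]; ring_nf

lemma sin_b (k : ℕ) : Real.sin (2*π*k - π/2) = -1 := by
  have : 2*π*k - π/2 = 2*π*k + (-(π/2)) := by ring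
  rw [this, sin_shift, Real.sin_neg, Real.sin_pi_div_two]

lemma cos_b (k : ℕ) : Real.cos (2*π*k - π/2) = 0 := by
  have : 2*π*k - π/2 = 2*π*k + (-(π/2)) := by ring
  rw [this, cos_shift, Real.cos_neg, Real.cos_pi_div_two]

lemma sin_a (k : ℕ) : Real.sin (2*π*k - 3*π/4) = -(Real.sqrt 2 / 2) := by
  have h : 2*π*k - 3*π/4 = 2*π*k + (-(3*π/4)) := by ring
  rw [h, sin_shift, Real.sin_neg]
  have h2 : 3*π/4 = π - π/4 := by ring
  rw [h2, Real.sin_pi_sub, Real.sin_pi_div_four]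

lemma cos_a (k : ℕ) : Real.cos (2*π*k - 3*π/4) = -(Real.sqrt 2 / 2) := by
  have h : 2*π*k - 3*π/4 = 2*π*k + (-(3*π/4)) := by ring
  rw [h, cos_shift, Real.cos_neg]
  have h2 : 3*π/4 = π - π/4 := by ring
  rw [h2, Real.cos_pi_sub, Real.cos_pi_div_four]

lemma sqrt2_pos : (0:ℝ) < Real.sqrt 2 / 2 := by positivity

lemma F_a_nonpos (k : ℕ) (hk : 1 ≤ k) : F (2*π*k - 3*π/4) ≤ 0 := by
  have hpi := Real.pi_gt_three
  have hk1 : (1:ℝ) ≤ k := by exact_mod_cast hk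
  have hy : (1:ℝ) < 2*π*k - 3*π/4 := by nlinarith
  have hlog2 := Real.log_two_lt_d9
  have hns : Real.sqrt 2 / 2 ≠ 0 := sqrt2_pos.ne'
  have hlq : Real.log (Real.sqrt 2 / 2) = -(Real.log 2 / 2) := by
    rw [Real.log_div (Real.sqrt_ne_zero'.2 (by norm_num)) (by norm_num),
      Real.log_sqrt (by norm_num)]
    ring
  unfold F
  rw [sin_a, cos_a, neg_neg, mul_div_cancel_right₀ _ (neg_ne_zero.2 hns), hlq]
  have h1 := Real.log_le_sub_one_of_pos (lt_trans one_pos hy)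
  have h2 : (0:ℝ) < Real.log 2 := Real.log_pos (by norm_num)
  linarith

lemma F_b_nonneg (k : ℕ) (hk : 1 ≤ k) : 0 ≤ F (2*π*k - π/2) := by
  have hpi := Real.pi_gt_three
  have hk1 : (1:ℝ) ≤ k := by exact_mod_cast hk
  have hy : (1:ℝ) ≤ 2*π*k - π/2 := by nlinarith
  unfold F
  rw [sin_b, cos_b, neg_neg, Real.log_one]
  have h := Real.log_nonneg hy
  simp
  linarith

lemma Icc_subset_Ioo (k : ℕ) :
    Icc (2*π*k - 3*π/4) (2*π*k - π/2) ⊆ Ioo (2*π*k - π) (2*π*k) := by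
  have hpi := Real.pi_gt_three
  intro y hy
  exact ⟨by have := hy.1; linarith, by have := hy.2; linarith⟩

lemma exY (k : ℕ) : ∃ y, y ∈ Icc (2*π*(k+1:ℕ) - 3*π/4) (2*π*(k+1:ℕ) - π/2) ∧ F y = 0 := by
  have hpi := Real.pi_gt_three
  have hk : 1 ≤ k + 1 := Nat.le_add_left 1 k
  have hab : 2*π*(k+1:ℕ) - 3*π/4 ≤ 2*π*(k+1:ℕ) - π/2 := by
    have : (1:ℝ) ≤ (k+1:ℕ) := by exact_mod_cast hk
    nlinarith
  have hcont : ContinuousOn F (Icc (2*π*(k+1:ℕ) - 3*π/4) (2*π*(k+1:ℕ) - π/2)) := by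
    intro y hy
    have hy' := Icc_subset_Ioo (k+1) hy
    have h1 : (1:ℝ) < y := by
      have : (1:ℝ) ≤ (k+1:ℕ) := by exact_mod_cast hk
      have := hy'.1; nlinarith
    exact (hasDerivAt_F (lt_trans one_pos h1)
      (sin_lt_zero_of_mem hk hy').ne).continuousAt.continuousWithinAt
  have h0 : (0:ℝ) ∈ Icc (F (2*π*(k+1:ℕ) - 3*π/4)) (F (2*π*(k+1:ℕ) - π/2)) :=
    ⟨F_a_nonpos (k+1) hk, F_b_nonneg (k+1) hk⟩
  obtain ⟨y, hy, hFy⟩ := intermediate_value_Icc hab hcont h0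
  exact ⟨y, hy, hFy⟩

/-- Imaginary part of the `k`-th root (meaningful for `k ≥ 1`). -/
def Y (k : ℕ) : ℝ := (exY (k-1)).choose

lemma Y_mem (k : ℕ) (hk : 1 ≤ k) : Y k ∈ Icc (2*π*k - 3*π/4) (2*π*k - π/2) := by
  obtain ⟨m, rfl⟩ := Nat.exists_eq_add_of_le hk
  have he : 1 + m = m + 1 := Nat.add_comm 1 m
  rw [he]
  exact (exY m).choose_spec.1

lemma F_Y (k : ℕ) (hk : 1 ≤ k) : F (Y k) = 0 := (exY (k-1)).choose_spec.2

lemma Y_sin_le (k : ℕ) (hk : 1 ≤ k) : Real.sin (Y k) ≤ -(1/2) := by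
  have hpi := Real.pi_gt_three
  obtain ⟨h1, h2⟩ := Y_mem k hk
  set t := Y k - 2*π*k with ht
  have hteq : Y k = 2*π*k + t := by ring
  have hst : Real.sin (Y k) = Real.sin t := by rw [hteq, sin_shift]
  have ht1 : -(3*π/4) ≤ t := by simp only [ht]; linarith
  have ht2 : t ≤ -(π/2) := by simp only [ht]; linarith
  have hcv : (1:ℝ)/2 ≤ Real.cos (-(π/2 + t)) := by
    rw [← Real.cos_pi_div_three]
    apply Real.cos_le_cos_of_nonneg_of_le_pi (by linarith) (by linarith) (by linarith)
  have h1' : Real.sin (-t) = Real.cos (π/2 + t) := by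
    rw [← Real.cos_pi_div_two_sub]; ring_nf
  have h2' : Real.cos (π/2 + t) = Real.cos (-(π/2 + t)) := (Real.cos_neg _).symm
  have : (1:ℝ)/2 ≤ Real.sin (-t) := by rw [h1', h2']; exact hcv
  rw [Real.sin_neg] at this
  linarith [hst ▸ (by linarith : Real.sin t ≤ -(1/2))]


def Sset : Set ℂ := {lam : ℂ | lam * Complex.exp lam = 1}

lemma mem_parts (x y : ℝ) : (⟨x, y⟩:ℂ) ∈ Sset ↔
    x * (Real.exp x * Real.cos y) - y * (Real.exp x * Real.sin y) = 1 ∧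
    x * (Real.exp x * Real.sin y) + y * (Real.exp x * Real.cos y) = 0 := by
  simp [Sset, Set.mem_setOf_eq, Complex.ext_iff, Complex.mul_re, Complex.mul_im,
    Complex.exp_re, Complex.exp_im]

lemma memS_iff (x y : ℝ) (hy : 0 < y) :
    (⟨x, y⟩:ℂ) ∈ Sset ↔
      Real.sin y < 0 ∧ x = Real.log (-Real.sin y / y) ∧ F y = 0 := by
  have hex : (0:ℝ) < Real.exp x := Real.exp_pos x
  have hpyth := Real.sin_sq_add_cos_sq y
  rw [mem_parts]
  constructor
  · rintro ⟨hre, him⟩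
    have hsy : Real.sin y ≠ 0 := by
      intro h0
      have hc : y * (Real.exp x * Real.cos y) = 0 := by
        rw [h0] at him; linarith [him]
      have : Real.cos y = 0 := by
        rcases mul_eq_zero.1 hc with h | h
        · exact absurd h hy.ne'
        · rcases mul_eq_zero.1 h with h | h
          · exact absurd h hex.ne'
          · exact h
      rw [h0, this] at hpyth; norm_num at hpyth
    have him' : x * Real.sin y + y * Real.cos y = 0 := by
      have h2 : Real.exp x * (x * Real.sin y + y * Real.cos y) = 0 := by
        linear_combination him
      exact (mul_eq_zero.1 h2).resolve_left hex.ne'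
    have hre' : Real.exp x * (x * Real.cos y - y * Real.sin y) = 1 := by
      linear_combination hre
    have h3 : Real.sin y * (x * Real.cos y - y * Real.sin y) = -y := by
      linear_combination Real.cos y * him' - y * hpyth
    have h4 : Real.sin y = Real.exp x * (-y) := by
      linear_combination (-(Real.sin y)) * hre' + Real.exp x * h3
    have hsneg : Real.sin y < 0 := by nlinarith
    refine ⟨hsneg, ?_, ?_⟩
    · rw [show -Real.sin y / y = Real.exp x by rw [h4]; field_simp, Real.log_exp]
    · have hls : Real.log (-Real.sin y) = Real.log y + x := by
        rw [show -Real.sin y = y * Real.exp x by linarith [h4]]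
        rw [Real.log_mul hy.ne' hex.ne', Real.log_exp]
      have hcot : y * Real.cos y / Real.sin y = -x := by
        rw [show y * Real.cos y = -x * Real.sin y by linarith [him']]
        exact mul_div_cancel_right₀ _ hsy
      unfold F
      rw [hls, hcot]
      ring
  · rintro ⟨hsneg, hx, hF⟩
    have hsy : Real.sin y ≠ 0 := hsneg.ne
    have harg : (0:ℝ) < -Real.sin y / y := div_pos (by linarith) hy
    have hexeq : Real.exp x = -Real.sin y / y := by rw [hx, Real.exp_log harg]
    have hxval : x = Real.log (-Real.sin y) - Real.log y := by
      rw [hx, Real.log_div (by linarith) hy.ne']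
    have hcot : y * Real.cos y = -x * Real.sin y := by
      have h1 : Real.log y - Real.log (-Real.sin y) - y * Real.cos y / Real.sin y = 0 := hF
      have h2 : y * Real.cos y / Real.sin y = -x := by rw [hxval]; linarith
      calc y * Real.cos y = y * Real.cos y / Real.sin y * Real.sin y := by
            field_simp
        _ = -x * Real.sin y := by rw [h2]
    constructor
    · have h5 : Real.sin y * (x * Real.cos y - y * Real.sin y) = -y := by
        linear_combination Real.cos y * hcot - y * hpyth
      rw [show x * (Real.exp x * Real.cos y) - y * (Real.exp x * Real.sin y)
          = Real.exp x * (x * Real.cos y - y * Real.sin y) by ring, hexeq]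
      field_simp
      linear_combination -h5
    · rw [show x * (Real.exp x * Real.sin y) + y * (Real.exp x * Real.cos y)
          = Real.exp x * (x * Real.sin y + y * Real.cos y) by ring]
      have : x * Real.sin y + y * Real.cos y = 0 := by linarith [hcot]
      rw [this, mul_zero]


lemma Y_pos (k : ℕ) (hk : 1 ≤ k) : 0 < Y k := by
  have hpi := Real.pi_gt_three
  have h := (Y_mem k hk).1
  have hk1 : (1:ℝ) ≤ k := by exact_mod_cast hk
  nlinarith

/-- Real part of the `k`-th root. -/
def X (k : ℕ) : ℝ := Real.log (-Real.sin (Y k) / Y k)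

lemma Y_sin_neg (k : ℕ) (hk : 1 ≤ k) : Real.sin (Y k) < 0 :=
  lt_of_le_of_lt (Y_sin_le k hk) (by norm_num)

lemma root_mem (k : ℕ) (hk : 1 ≤ k) : (⟨X k, Y k⟩:ℂ) ∈ Sset :=
  (memS_iff (X k) (Y k) (Y_pos k hk)).2 ⟨Y_sin_neg k hk, rfl, F_Y k hk⟩

lemma classify {x y : ℝ} (hy : 0 < y) (h : (⟨x, y⟩:ℂ) ∈ Sset) :
    ∃ k : ℕ, 1 ≤ k ∧ y = Y k ∧ x = X k := by
  have hpi := Real.pi_pos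
  obtain ⟨hs, hx, hF⟩ := (memS_iff x y hy).1 h
  have h2pi : (0:ℝ) < 2*π := by linarith
  set K : ℤ := ⌈y / (2*π)⌉ with hK
  have hKpos : 0 < K := Int.ceil_pos.2 (div_pos hy h2pi)
  obtain ⟨k, hkK⟩ : ∃ k : ℕ, (k:ℤ) = K := ⟨K.toNat, Int.toNat_of_nonneg hKpos.le⟩
  have hk1 : 1 ≤ k := by omega
  have hkr : (k:ℝ) = (K:ℝ) := by exact_mod_cast hkK
  have hle : y ≤ 2*π*k := by
    have := Int.le_ceil (y / (2*π))
    rw [← hK] at this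
    rw [div_le_iff₀ h2pi] at this
    rw [hkr]; linarith
  have hlt : y < 2*π*k := by
    rcases lt_or_eq_of_le hle with h' | h'
    · exact h'
    · exfalso
      have : Real.sin y = 0 := by
        rw [h', show 2*π*(k:ℝ) = 2*π*(k:ℕ) + 0 by push_cast; ring, sin_shift, Real.sin_zero]
      exact hs.ne this
  have hgt2 : 2*π*((k:ℝ) - 1) < y := by
    have := Int.ceil_lt_add_one (y / (2*π))
    rw [← hK] at this
    have h2 : (K:ℝ) - 1 < y / (2*π) := by linarith
    rw [← hkr] at h2
    calc 2*π*((k:ℝ)-1) = ((k:ℝ)-1) * (2*π) := by ring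
      _ < y / (2*π) * (2*π) := by exact mul_lt_mul_of_pos_right h2 h2pi
      _ = y := by field_simp
  have hgt : 2*π*k - π < y := by
    by_contra hcon
    push_neg at hcon
    -- then y - 2π(k-1) ∈ (0, π], sin y ≥ 0
    have hknat : ∃ m : ℕ, k = m + 1 := ⟨k - 1, by omega⟩
    obtain ⟨m, rfl⟩ := hknat
    have hmr : ((m+1:ℕ):ℝ) - 1 = (m:ℕ) := by push_cast; ring
    set t := y - 2*π*m with htdef
    have ht0 : 0 < t := by
      have := hgt2; rw [hmr] at this; simp only [htdef]; linarith
    have htpi : t ≤ π := by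
      simp only [htdef]
      have : ((m+1:ℕ):ℝ) = (m:ℝ) + 1 := by push_cast; ring
      rw [this] at hcon
      linarith
    have : Real.sin y = Real.sin t := by
      rw [show y = 2*π*(m:ℕ) + t by simp [htdef], sin_shift]
    have := Real.sin_nonneg_of_nonneg_of_le_pi ht0.le htpi
    linarith [hs, ‹Real.sin y = Real.sin t›]
  -- now y ∈ Ioo (2πk - π) (2πk) with F y = 0
  have hyIoo : y ∈ Ioo (2*π*(k:ℕ) - π) (2*π*(k:ℕ)) := ⟨hgt, hlt⟩
  have hYIoo : Y k ∈ Ioo (2*π*(k:ℕ) - π) (2*π*(k:ℕ)) := Icc_subset_Ioo k (Y_mem k hk1)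
  have heq : y = Y k := by
    have hinj := (F_strictMonoOn k hk1).injOn
    exact hinj hyIoo hYIoo (by rw [hF, F_Y k hk1])
  refine ⟨k, hk1, heq, ?_⟩
  rw [X, ← heq, hx]

lemma Sset_conj {z : ℂ} (h : z ∈ Sset) : (starRingEnd ℂ) z ∈ Sset := by
  have : (starRingEnd ℂ) z * Complex.exp ((starRingEnd ℂ) z) = 1 := by
    rw [Complex.exp_conj, ← map_mul, h]
    simp
  exact this

lemma omega_exu : ∃! x : ℝ, x * Real.exp x = 1 := by
  have hcont : Continuous (fun x : ℝ => x * Real.exp x) :=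
    continuous_id.mul Real.continuous_exp
  have hex : ∃ x ∈ Icc (0:ℝ) 1, x * Real.exp x = 1 := by
    have h1 : (1:ℝ) ∈ Icc ((0:ℝ) * Real.exp 0) ((1:ℝ) * Real.exp 1) := by
      constructor
      · simp
      · have := Real.add_one_le_exp (1:ℝ)
        simp only [one_mul]
        linarith
    obtain ⟨x, hx, hfx⟩ := intermediate_value_Icc (by norm_num : (0:ℝ) ≤ 1)
      hcont.continuousOn h1
    exact ⟨x, hx, hfx⟩
  have hmono : StrictMonoOn (fun x : ℝ => x * Real.exp x) (Ici 0) := by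
    apply strictMonoOn_of_deriv_pos (convex_Ici 0) hcont.continuousOn
    intro x hx
    rw [interior_Ici] at hx
    have hD : HasDerivAt (fun x : ℝ => x * Real.exp x)
        (1 * Real.exp x + x * Real.exp x) x :=
      (hasDerivAt_id x).mul (Real.hasDerivAt_exp x)
    rw [hD.deriv]
    have := Real.exp_pos x
    have : (0:ℝ) < x := hx
    nlinarith [Real.exp_pos x]
  obtain ⟨x₀, hx₀, hfx₀⟩ := hex
  refine ⟨x₀, hfx₀, ?_⟩
  intro z hz
  have hpos : ∀ w : ℝ, w * Real.exp w = 1 → 0 ≤ w := by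
    intro w hw
    by_contra hneg
    push_neg at hneg
    nlinarith [Real.exp_pos w]
  exact hmono.injOn (mem_Ici.2 (hpos z hz)) (mem_Ici.2 (hpos x₀ hfx₀)) (by rw [hz, hfx₀])

/-- The Omega constant. -/
def Om : ℝ := Classical.choose omega_exu

lemma Om_root : Om * Real.exp Om = 1 := (Classical.choose_spec omega_exu).1

lemma Om_unique {x : ℝ} (hx : x * Real.exp x = 1) : x = Om :=
  (Classical.choose_spec omega_exu).2 x hx

lemma real_mem_iff (x : ℝ) : ((x:ℂ) ∈ Sset) ↔ x * Real.exp x = 1 := by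
  rw [Sset, Set.mem_setOf_eq, ← Complex.ofReal_exp, ← Complex.ofReal_mul,
    show (1:ℂ) = ((1:ℝ):ℂ) by norm_num]
  exact_mod_cast Complex.ofReal_inj


/-- The enumeration of the roots. -/
def l : ℤ → ℂ := fun k =>
  if k = 0 then ⟨Om, 0⟩
  else if 0 < k then ⟨X k.toNat, Y k.toNat⟩
  else ⟨X (-k).toNat, -(Y (-k).toNat)⟩

lemma l_zero : l 0 = ⟨Om, 0⟩ := rfl

lemma l_pos {k : ℤ} (h : 0 < k) : l k = ⟨X k.toNat, Y k.toNat⟩ := by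
  simp only [l, if_neg h.ne', if_pos h]

lemma l_neg {k : ℤ} (h : k < 0) : l k = ⟨X (-k).toNat, -(Y (-k).toNat)⟩ := by
  simp only [l, if_neg h.ne, if_neg (not_lt.2 h.le)]

lemma Y_lt_of_lt {m n : ℕ} (hm : 1 ≤ m) (hmn : m < n) : Y m < Y n := by
  have hpi := Real.pi_gt_three
  have h1 := (Y_mem m hm).2
  have h2 := (Y_mem n (le_trans hm hmn.le)).1
  have : (m:ℝ) + 1 ≤ (n:ℝ) := by exact_mod_cast hmn
  nlinarith

lemma im_l_strictMono : StrictMono (fun k : ℤ => (l k).im) := by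
  have hpi := Real.pi_gt_three
  have hY1 := Y_pos 1 (le_refl 1)
  apply strictMono_int_of_lt_succ
  intro k
  rcases lt_trichotomy k 0 with hk | hk | hk
  · rcases eq_or_lt_of_le (by omega : k + 1 ≤ 0) with hk1 | hk1
    · have hkm1 : k = -1 := by omega
      subst hkm1
      have e1 : l (-1) = ⟨X 1, -(Y 1)⟩ := by
        rw [l_neg (by norm_num : (-1:ℤ) < 0)]; norm_num
      have e2 : ((-1:ℤ) + 1) = 0 := by norm_num
      rw [e1, e2, l_zero]
      simpa using hY1
    · rw [l_neg hk, l_neg hk1]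
      simp only [neg_lt_neg_iff]
      exact Y_lt_of_lt (by omega) (by omega)
  · subst hk
    have e2 : ((0:ℤ) + 1) = 1 := by norm_num
    rw [l_zero, e2, l_pos (by norm_num : (0:ℤ) < 1)]
    simpa using hY1
  · rw [l_pos hk, l_pos (by omega : (0:ℤ) < k + 1)]
    simp only
    have h2 : (k+1).toNat = k.toNat + 1 := by omega
    rw [h2]
    exact Y_lt_of_lt (by omega) (Nat.lt_succ_self _)

lemma l_injective : Function.Injective l := by
  intro a b hab
  exact im_l_strictMono.injective (by rw [hab])

lemma conj_mk (a b : ℝ) : (starRingEnd ℂ) (⟨a, b⟩:ℂ) = ⟨a, -b⟩ := by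
  apply Complex.ext <;> simp

lemma l_conj (k : ℤ) : l (-k) = (starRingEnd ℂ) (l k) := by
  rcases lt_trichotomy k 0 with hk | hk | hk
  · rw [l_neg hk, l_pos (by omega : 0 < -k), conj_mk, neg_neg]
  · subst hk
    norm_num [l_zero, conj_mk]
  · rw [l_pos hk, l_neg (by omega : -k < 0), conj_mk, neg_neg]

lemma l_mem (k : ℤ) : l k ∈ Sset := by
  rcases lt_trichotomy k 0 with hk | hk | hk
  · have h := l_conj (-k)
    rw [neg_neg] at h
    rw [h]
    apply Sset_conj
    rw [l_pos (by omega : 0 < -k)]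
    exact root_mem _ (by omega)
  · subst hk
    rw [l_zero]
    have : ((Om:ℝ):ℂ) ∈ Sset := (real_mem_iff Om).2 Om_root
    convert this using 1
    apply Complex.ext <;> simp
  · rw [l_pos hk]
    exact root_mem _ (by omega)

lemma range_l : Set.range l = Sset := by
  apply Set.eq_of_subset_of_subset
  · rintro z ⟨k, rfl⟩
    exact l_mem k
  · intro z hz
    rcases lt_trichotomy z.im 0 with him | him | him
    · have hzc : (starRingEnd ℂ) z ∈ Sset := Sset_conj hz
      have hmk : (starRingEnd ℂ) z = (⟨z.re, -z.im⟩:ℂ) := by apply Complex.ext <;> simp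
      rw [hmk] at hzc
      obtain ⟨k, hk1, hy, hx⟩ := classify (by linarith) hzc
      refine ⟨-(k:ℤ), ?_⟩
      rw [l_conj, l_pos (by exact_mod_cast hk1 : (0:ℤ) < (k:ℤ)), Int.toNat_natCast]
      rw [← hy, ← hx, conj_mk]
      apply Complex.ext <;> simp
    · refine ⟨0, ?_⟩
      rw [l_zero]
      have hre : z.re * Real.exp z.re = 1 := by
        have hz' : ((z.re : ℝ):ℂ) ∈ Sset := by
          have : z = ((z.re:ℝ):ℂ) := by apply Complex.ext <;> simp [him]
          rwa [← this]
        exact (real_mem_iff z.re).1 hz'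
      have : z.re = Om := Om_unique hre
      apply Complex.ext <;> simp [this, him]
    · have hmk : z = (⟨z.re, z.im⟩:ℂ) := by apply Complex.ext <;> simp
      rw [hmk] at hz
      obtain ⟨k, hk1, hy, hx⟩ := classify him hz
      refine ⟨(k:ℤ), ?_⟩
      rw [l_pos (by exact_mod_cast hk1 : (0:ℤ) < (k:ℤ)), Int.toNat_natCast]
      rw [← hy, ← hx]


lemma X_eq (m : ℕ) (hm : 1 ≤ m) :
    X m = Real.log (-Real.sin (Y m)) - Real.log (Y m) := by
  rw [X, Real.log_div (by linarith [Y_sin_neg m hm]) (Y_pos m hm).ne']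

lemma log_s_bounds (m : ℕ) (hm : 1 ≤ m) :
    -Real.log 2 ≤ Real.log (-Real.sin (Y m)) ∧ Real.log (-Real.sin (Y m)) ≤ 0 := by
  have h1 := Y_sin_le m hm
  have h2 := Real.neg_one_le_sin (Y m)
  constructor
  · have : Real.log ((1:ℝ)/2) ≤ Real.log (-Real.sin (Y m)) :=
      Real.log_le_log (by norm_num) (by linarith)
    rwa [show (1:ℝ)/2 = 2⁻¹ by norm_num, Real.log_inv] at this
  · exact Real.log_nonpos (by linarith) (by linarith)

lemma mainA (m : ℕ) (hm : 3 ≤ m) :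
    Real.log m ≤ -(X m) ∧ -(X m) ≤ 15 * Real.log m ∧
    (m:ℝ) ≤ ‖(⟨X m, Y m⟩:ℂ)‖ ∧ ‖(⟨X m, Y m⟩:ℂ)‖ ≤ 15 * m := by
  have hm1 : 1 ≤ m := by omega
  have hpi := Real.pi_gt_three
  have hm3 : (3:ℝ) ≤ m := by exact_mod_cast hm
  have hpi2 := Real.pi_lt_d2
  obtain ⟨hYa, hYb⟩ := Y_mem m hm1
  have hYpos := Y_pos m hm1
  have hYlb : (m:ℝ) ≤ Y m := by nlinarith
  have hYub : Y m ≤ 7*m := by nlinarith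
  have hY3 : Y m ≤ (m:ℝ)^3 := by nlinarith [sq_nonneg ((m:ℝ) - 3), hm3]
  have hlogY_lb : Real.log m ≤ Real.log (Y m) := Real.log_le_log (by linarith) hYlb
  have hlogY_ub : Real.log (Y m) ≤ 3 * Real.log m := by
    have h := Real.log_le_log hYpos hY3
    rw [Real.log_pow] at h
    push_cast at h
    exact h
  have hlogm_pos : 0 < Real.log m := Real.log_pos (by exact_mod_cast (by omega : 1 < m))
  have hlog2m : Real.log 2 ≤ Real.log m := Real.log_le_log (by norm_num) (by exact_mod_cast (by omega : 2 ≤ m))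
  have hXe := X_eq m hm1
  obtain ⟨hs1, hs2⟩ := log_s_bounds m hm1
  have hA1 : Real.log m ≤ -(X m) := by rw [hXe]; linarith
  have hA2 : -(X m) ≤ 15 * Real.log m := by rw [hXe]; linarith
  refine ⟨hA1, hA2, ?_, ?_⟩
  · have h := Complex.abs_im_le_norm (⟨X m, Y m⟩:ℂ)
    calc (m:ℝ) ≤ Y m := hYlb
      _ ≤ |(⟨X m, Y m⟩:ℂ).im| := le_abs_self _
      _ ≤ _ := Complex.abs_im_le_norm _
  · have h := Complex.norm_le_abs_re_add_abs_im (⟨X m, Y m⟩:ℂ)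
    have hre : |(⟨X m, Y m⟩:ℂ).re| = -(X m) := by
      simp only
      rw [abs_of_nonpos (by linarith)]
    have him : |(⟨X m, Y m⟩:ℂ).im| = Y m := by
      simp only
      rw [abs_of_pos hYpos]
    rw [hre, him] at h
    have hlogm : Real.log m ≤ (m:ℝ) - 1 := Real.log_le_sub_one_of_pos (by linarith)
    linarith

lemma mainG (m : ℕ) (hm : 2 ≤ m) :
    5 ≤ Y (m+1) - Y m ∧ Y (m+1) - Y m ≤ 8 ∧ |X (m+1) - X m| ≤ 2 := by
  have hm1 : 1 ≤ m := by omega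
  have hm1' : 1 ≤ m + 1 := by omega
  have hpi := Real.pi_gt_three
  have hpi2 := Real.pi_lt_d2
  have hm2 : (2:ℝ) ≤ m := by exact_mod_cast hm
  obtain ⟨hYa, hYb⟩ := Y_mem m hm1
  obtain ⟨hYa', hYb'⟩ := Y_mem (m+1) hm1'
  have hc : ((m+1:ℕ):ℝ) = (m:ℝ) + 1 := by push_cast; ring
  rw [hc] at hYa' hYb'
  have hYpos := Y_pos m hm1
  have hYpos' := Y_pos (m+1) hm1'
  refine ⟨by linarith, by linarith, ?_⟩
  have hdouble : Y (m+1) ≤ 2 * Y m := by nlinarith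
  have hmono : Y m ≤ Y (m+1) := (Y_lt_of_lt hm1 (Nat.lt_succ_self m)).le
  have hlY1 : Real.log (Y m) ≤ Real.log (Y (m+1)) := Real.log_le_log hYpos hmono
  have hlY2 : Real.log (Y (m+1)) ≤ Real.log 2 + Real.log (Y m) := by
    have := Real.log_le_log hYpos' hdouble
    rwa [Real.log_mul (by norm_num) hYpos.ne'] at this
  obtain ⟨hs1, hs2⟩ := log_s_bounds m hm1
  obtain ⟨hs1', hs2'⟩ := log_s_bounds (m+1) hm1'
  have hlog2 := Real.log_two_lt_d9
  have hlog2' : (0:ℝ) < Real.log 2 := Real.log_pos (by norm_num)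
  rw [X_eq m hm1, X_eq (m+1) hm1']
  rw [abs_le]
  constructor <;> linarith


lemma le_abs_mk (a b : ℝ) : |b| ≤ ‖(⟨a, b⟩:ℂ)‖ := by
  simpa using Complex.abs_im_le_norm (⟨a, b⟩:ℂ)

lemma abs_mk_le (a b : ℝ) : ‖(⟨a, b⟩:ℂ)‖ ≤ |a| + |b| := by
  simpa using Complex.norm_le_abs_re_add_abs_im (⟨a, b⟩:ℂ)

end Stmt5Aux

open Stmt5Aux in
theorem stmt5 :
    let S : Set ℂ := {lam : ℂ | lam * Complex.exp lam = 1}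
    -- `S` is countably infinite
    S.Countable ∧ S.Infinite ∧
    -- every element of `S` is a simple zero of `λ ↦ λ e^λ - 1`
    (∀ lam ∈ S, deriv (fun z : ℂ => z * Complex.exp z - 1) lam ≠ 0) ∧
    -- `S` contains exactly one real number
    (∃! x : ℝ, ((x : ℂ) ∈ S)) ∧
    -- and there is a bijective enumeration with the stated properties
    ∃ l : ℤ → ℂ,
      Function.Injective l ∧ Set.range l = S ∧
      StrictMono (fun k : ℤ => (l k).im) ∧
      (l 0).im = 0 ∧
      (∀ k : ℤ, l (-k) = (starRingEnd ℂ) (l k)) ∧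
      ∃ (c C : ℝ) (K : ℤ), 0 < c ∧ c ≤ C ∧ 2 ≤ K ∧
        ∀ k : ℤ, K ≤ |k| →
          (c * Real.log (|k| : ℤ) ≤ -(l k).re ∧ -(l k).re ≤ C * Real.log (|k| : ℤ)) ∧
          (c * ((|k| : ℤ) : ℝ) ≤ ‖l k‖ ∧ ‖l k‖ ≤ C * ((|k| : ℤ) : ℝ)) ∧
          (c ≤ ‖l (k + 1) - l k‖ ∧ ‖l (k + 1) - l k‖ ≤ C) ∧
          c ≤ ‖(starRingEnd ℂ) (l k) + l (k + 1)‖ := by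
  intro S
  have hSeq : S = Sset := rfl
  refine ⟨?_, ?_, ?_, ?_, ?_⟩
  · rw [hSeq, ← range_l]; exact Set.countable_range _
  · rw [hSeq, ← range_l]; exact Set.infinite_range_of_injective l_injective
  · intro lam hlam
    have hd : HasDerivAt (fun z : ℂ => z * Complex.exp z - 1)
        (1 * Complex.exp lam + lam * Complex.exp lam) lam :=
      ((hasDerivAt_id lam).mul (Complex.hasDerivAt_exp lam)).sub_const 1
    rw [hd.deriv]
    intro h0
    have hfac : (1 + lam) * Complex.exp lam = 0 := by linear_combination h0
    have hlam1 : lam = -1 := by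
      rcases mul_eq_zero.1 hfac with h | h
      · linear_combination h
      · exact absurd h (Complex.exp_ne_zero lam)
    rw [hSeq] at hlam
    have hmem : lam * Complex.exp lam = 1 := hlam
    rw [hlam1] at hmem
    have hexp : Complex.exp (-1) = -1 := by linear_combination -hmem
    have habs := congrArg norm hexp
    rw [Complex.norm_exp] at habs
    have h1 : Real.exp (-1) = 1 := by simpa using habs
    have h2 : (-1:ℝ) = 0 := by rwa [Real.exp_eq_one_iff] at h1
    norm_num at h2
  · refine ⟨Om, ?_, ?_⟩
    · show ((Om:ℝ):ℂ) ∈ Sset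
      exact (real_mem_iff Om).2 Om_root
    · intro y hy
      exact Om_unique ((real_mem_iff y).1 hy)
  · refine ⟨l, l_injective, by rw [hSeq, ← range_l], im_l_strictMono, rfl, l_conj, 1, 15, 3,
      one_pos, by norm_num, by norm_num, ?_⟩
    intro k hk
    have hm3 : 3 ≤ k.natAbs := by rw [Int.abs_eq_natAbs] at hk; omega
    set m : ℕ := k.natAbs with hmdef
    have hcast : ((|k| : ℤ) : ℝ) = (m:ℝ) := by
      rw [Int.abs_eq_natAbs]; norm_cast
    have hG5 : ∀ n : ℕ, 2 ≤ n → (5:ℝ) ≤ Y (n+1) - Y n := fun n hn => (mainG n hn).1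
    have hG8 : ∀ n : ℕ, 2 ≤ n → Y (n+1) - Y n ≤ 8 := fun n hn => (mainG n hn).2.1
    have hG2 : ∀ n : ℕ, 2 ≤ n → |X (n+1) - X n| ≤ 2 := fun n hn => (mainG n hn).2.2
    rcases lt_or_gt_of_ne (by omega : k ≠ 0) with hkneg | hkpos
    · -- negative k : k ≤ -3
      obtain ⟨n, hmn, hn2⟩ : ∃ n, m = n + 1 ∧ 2 ≤ n := ⟨m - 1, by omega, by omega⟩
      have hl : l k = ⟨X m, -(Y m)⟩ := by
        rw [l_neg hkneg]
        congr 2 <;> · congr 1; omega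
      have hl1 : l (k+1) = ⟨X n, -(Y n)⟩ := by
        rw [l_neg (by omega : k + 1 < 0)]
        congr 2 <;> · congr 1; omega
      obtain ⟨hA1, hA2, hA3, hA4⟩ := mainA m hm3
      have habs : ‖(⟨X m, -(Y m)⟩:ℂ)‖ = ‖(⟨X m, Y m⟩:ℂ)‖ := by
        rw [← conj_mk, Complex.norm_conj]
      have hsub : l (k+1) - l k = (⟨X n - X m, Y m - Y n⟩:ℂ) := by
        rw [hl, hl1]; apply Complex.ext <;> simp <;> ring
      have hconjadd : (starRingEnd ℂ) (l k) + l (k+1) = (⟨X m + X n, Y m - Y n⟩:ℂ) := by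
        rw [hl, hl1, conj_mk]; apply Complex.ext <;> simp <;> ring
      have hYdiff5 : (5:ℝ) ≤ Y m - Y n := by have := hG5 n hn2; rw [hmn]; linarith
      have hYdiff8 : Y m - Y n ≤ 8 := by have := hG8 n hn2; rw [hmn]; linarith
      have hXdiff : |X n - X m| ≤ 2 := by
        have := hG2 n hn2; rw [hmn, abs_sub_comm]; exact this
      refine ⟨⟨?_, ?_⟩, ⟨?_, ?_⟩, ⟨?_, ?_⟩, ?_⟩
      · rw [hcast, hl, one_mul]; exact hA1
      · rw [hcast, hl]; exact hA2
      · rw [hcast, hl, one_mul, habs]; exact hA3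
      · rw [hcast, hl, habs]; exact hA4
      · rw [hsub]
        calc (1:ℝ) ≤ |Y m - Y n| := by rw [_root_.abs_of_nonneg (by linarith)]; linarith
          _ ≤ _ := le_abs_mk _ _
      · rw [hsub]
        calc ‖(⟨X n - X m, Y m - Y n⟩:ℂ)‖ ≤ |X n - X m| + |Y m - Y n| := abs_mk_le _ _
          _ ≤ 2 + 8 := add_le_add hXdiff
              (by rw [_root_.abs_of_nonneg (by linarith)]; linarith)
          _ ≤ 15 := by norm_num
      · rw [hconjadd]
        calc (1:ℝ) ≤ |Y m - Y n| := by rw [_root_.abs_of_nonneg (by linarith)]; linarith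
          _ ≤ _ := le_abs_mk _ _
    · -- positive k : 3 ≤ k
      have hl : l k = ⟨X m, Y m⟩ := by
        rw [l_pos hkpos]
        congr 2 <;> · congr 1; omega
      have hl1 : l (k+1) = ⟨X (m+1), Y (m+1)⟩ := by
        rw [l_pos (by omega : (0:ℤ) < k + 1)]
        congr 2 <;> · congr 1; omega
      obtain ⟨hA1, hA2, hA3, hA4⟩ := mainA m hm3
      have hsub : l (k+1) - l k = (⟨X (m+1) - X m, Y (m+1) - Y m⟩:ℂ) := by
        rw [hl, hl1]; apply Complex.ext <;> simp <;> ring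
      have hconjadd : (starRingEnd ℂ) (l k) + l (k+1) = (⟨X m + X (m+1), Y (m+1) - Y m⟩:ℂ) := by
        rw [hl, hl1, conj_mk]; apply Complex.ext <;> simp <;> ring
      have hYdiff5 := hG5 m (by omega)
      have hYdiff8 := hG8 m (by omega)
      have hXdiff := hG2 m (by omega)
      refine ⟨⟨?_, ?_⟩, ⟨?_, ?_⟩, ⟨?_, ?_⟩, ?_⟩
      · rw [hcast, hl, one_mul]; exact hA1
      · rw [hcast, hl]; exact hA2
      · rw [hcast, hl, one_mul]; exact hA3
      · rw [hcast, hl]; exact hA4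
      · rw [hsub]
        calc (1:ℝ) ≤ |Y (m+1) - Y m| := by rw [_root_.abs_of_nonneg (by linarith)]; linarith
          _ ≤ _ := le_abs_mk _ _
      · rw [hsub]
        calc ‖(⟨X (m+1) - X m, Y (m+1) - Y m⟩:ℂ)‖
            ≤ |X (m+1) - X m| + |Y (m+1) - Y m| := abs_mk_le _ _
          _ ≤ 2 + 8 := add_le_add hXdiff
              (by rw [_root_.abs_of_nonneg (by linarith)]; linarith)
          _ ≤ 15 := by norm_num
      · rw [hconjadd]
        calc (1:ℝ) ≤ |Y (m+1) - Y m| := by rw [_root_.abs_of_nonneg (by linarith)]; linarith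
          _ ≤ _ := le_abs_mk _ _
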